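/- (Sampling-overhead lower bound on the distilled normalization.) Suppose p_q = max_k p_k is attained at index q, let n ≥ 1 be an integer, and set ε = ‖ρ̄ − ρ‖₁. If (p_q + ε)ⁿ < 2 p_qⁿ, then the (real) trace of ρ̄ⁿ satisfies tr(ρ̄ⁿ) ≥ 2 p_qⁿ − (p_q + ε)ⁿ > 0, and consequently the sampling overhead obeys tr(ρ̄ⁿ)⁻² ≤ ( 2 p_qⁿ − (p_q + ε)ⁿ )⁻². -/

import Mathlib

open MeasureTheory Complex
open scoped BigOperators ComplexConjugate Real NormedSpace ComplexOrder

attribute [local instance] Matrix.frobeniusSeminormedAddCommGroup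
  Matrix.frobeniusNormedAddCommGroup Matrix.frobeniusNormedSpace

noncomputable section

/-- The complex inner product on `ℂ^d`, conjugate-linear in the first argument. -/
def cinner {d : ℕ} (u v : Fin d → ℂ) : ℂ := ∑ i, conj (u i) * v i

/-- The rank-one matrix `|u⟩⟨v|`, acting as `w ↦ ⟨v, w⟩ u`. -/
def ketbra {d : ℕ} (u v : Fin d → ℂ) : Matrix (Fin d) (Fin d) ℂ :=
  Matrix.of fun i j => u i * conj (v j)

/-- The density of the centered normal distribution `N(0, σ)`. -/
def gaussPDF (σ t : ℝ) : ℝ := (Real.sqrt (2 * π) * σ)⁻¹ * Real.exp (-(t ^ 2) / (2 * σ ^ 2))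

/-- The time-evolved state `ψ(t) = exp(−i t H) ψ(0)`. -/
def evolve {d : ℕ} (H : Matrix (Fin d) (Fin d) ℂ) (ψ0 : Fin d → ℂ) (t : ℝ) : Fin d → ℂ :=
  (NormedSpace.exp ((-(Complex.I * (t : ℂ))) • H)).mulVec ψ0

/-- The time-evolved pure state `ρ(t) = |ψ(t)⟩⟨ψ(t)|`. -/
def rhoT {d : ℕ} (H : Matrix (Fin d) (Fin d) ℂ) (ψ0 : Fin d → ℂ) (t : ℝ) :
    Matrix (Fin d) (Fin d) ℂ :=
  ketbra (evolve H ψ0 t) (evolve H ψ0 t)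

/-- The Gaussian time-average `ρ̄ = ∫ G(t) ρ(t) dt` (a Bochner integral of the matrix-valued
function, with respect to the Frobenius norm topology on matrices). -/
def rhoBar {d : ℕ} (H : Matrix (Fin d) (Fin d) ℂ) (ψ0 : Fin d → ℂ) (σ : ℝ) :
    Matrix (Fin d) (Fin d) ℂ :=
  ∫ t : ℝ, gaussPDF σ t • rhoT H ψ0 t

/-- The trace norm (sum of singular values) `‖A‖₁ = tr √(Aᴴ A)`. -/
def traceNorm {d : ℕ} (A : Matrix (Fin d) (Fin d) ℂ) : ℝ :=
  (((Matrix.posSemidef_conjTranspose_mul_self A).1.eigenvectorUnitary.1 *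
      Matrix.diagonal (((↑) : ℝ → ℂ) ∘ (√·) ∘ (Matrix.posSemidef_conjTranspose_mul_self A).1.eigenvalues) *
      (star (Matrix.posSemidef_conjTranspose_mul_self A).1.eigenvectorUnitary : Matrix (Fin d) (Fin d) ℂ)).trace).re

/-- The operator norm `‖A‖_∞` of a matrix acting on the Euclidean space `ℂ^d`. -/
def opNorm {d : ℕ} (A : Matrix (Fin d) (Fin d) ℂ) : ℝ :=
  ‖Matrix.toEuclideanCLM (𝕜 := ℂ) A‖

/-! ### Auxiliary material -/

attribute [local instance] Matrix.frobeniusNormedRing Matrix.frobeniusNormedAlgebra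

/-- `B ↦ B *ᵥ v` as a continuous linear map. -/
def mulVecCLM {d : ℕ} (v : Fin d → ℂ) : Matrix (Fin d) (Fin d) ℂ →L[ℂ] (Fin d → ℂ) :=
  LinearMap.toContinuousLinearMap
    { toFun := fun B => B.mulVec v
      map_add' := fun A B => Matrix.add_mulVec A B v
      map_smul' := fun c A => Matrix.smul_mulVec c A v }

theorem exp_mulVec_eigen {d : ℕ} (A : Matrix (Fin d) (Fin d) ℂ) (v : Fin d → ℂ) (μ : ℂ)
    (h : A.mulVec v = μ • v) : (NormedSpace.exp A).mulVec v = Complex.exp μ • v := by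
  have hpow : ∀ k : ℕ, (A ^ k).mulVec v = μ ^ k • v := by
    intro k
    induction k with
    | zero => simp [Matrix.one_mulVec]
    | succ k ih =>
      rw [pow_succ, ← Matrix.mulVec_mulVec, h, Matrix.mulVec_smul, ih, smul_smul, pow_succ]
      ring_nf
  have hsum : Summable fun k : ℕ => (k.factorial : ℂ)⁻¹ • A ^ k :=
    NormedSpace.expSeries_summable' (𝕂 := ℂ) A
  have hmap := (mulVecCLM v).map_tsum hsum
  rw [NormedSpace.exp_eq_tsum (𝕂 := ℂ), show ∀ B, B.mulVec v = mulVecCLM v B from fun _ => rfl, hmap]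
  have hterm : ∀ k : ℕ, mulVecCLM v ((k.factorial : ℂ)⁻¹ • A ^ k)
      = ((k.factorial : ℂ)⁻¹ * μ ^ k) • v := by
    intro k
    show ((k.factorial : ℂ)⁻¹ • A ^ k).mulVec v = _
    rw [Matrix.smul_mulVec, hpow, smul_smul]
  have hsmu : Summable fun k : ℕ => (k.factorial : ℂ)⁻¹ * μ ^ k :=
    (NormedSpace.expSeries_summable' (𝕂 := ℂ) μ).congr fun k => by simp [smul_eq_mul]
  rw [tsum_congr hterm, hsmu.tsum_smul_const, Complex.exp_eq_exp_ℂ, NormedSpace.exp_eq_tsum (𝕂 := ℂ)]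
  simp only [smul_eq_mul]

/-- The Frobenius-norm topology on matrices. -/
abbrev matFrobTop {d : ℕ} : TopologicalSpace (Matrix (Fin d) (Fin d) ℂ) :=
  @UniformSpace.toTopologicalSpace _ (@PseudoMetricSpace.toUniformSpace _
    (@SeminormedAddCommGroup.toPseudoMetricSpace _ Matrix.frobeniusSeminormedAddCommGroup))

attribute [local instance] matFrobTop

theorem gaussPDF_eq (σ : ℝ) :
    gaussPDF σ = fun t => (Real.sqrt (2 * π) * σ)⁻¹ * Real.exp (-(2 * σ ^ 2)⁻¹ * t ^ 2) := by
  funext t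
  rw [gaussPDF, neg_div, div_eq_inv_mul, neg_mul]

theorem gaussPDF_nonneg (σ : ℝ) (hσ : 0 < σ) (t : ℝ) : 0 ≤ gaussPDF σ t :=
  mul_nonneg (inv_nonneg.2 (mul_nonneg (Real.sqrt_nonneg _) hσ.le)) (Real.exp_nonneg _)

theorem continuous_gaussPDF (σ : ℝ) : Continuous (gaussPDF σ) := by
  unfold gaussPDF; fun_prop

theorem integrable_gaussPDF (σ : ℝ) (hσ : 0 < σ) : Integrable (gaussPDF σ) := by
  rw [gaussPDF_eq σ]
  exact (integrable_exp_neg_mul_sq (by positivity)).const_mul _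

theorem integral_gaussPDF (σ : ℝ) (hσ : 0 < σ) : ∫ t : ℝ, gaussPDF σ t = 1 := by
  rw [gaussPDF_eq σ]
  simp only [integral_const_mul, integral_gaussian]
  rw [show π / (2 * σ ^ 2)⁻¹ = (2 * π) * σ ^ 2 by field_simp]
  rw [Real.sqrt_mul (by positivity) (σ ^ 2), Real.sqrt_sq hσ.le,
    inv_mul_cancel₀ (by positivity)]

theorem cinner_conj {d : ℕ} (u v : Fin d → ℂ) : conj (cinner u v) = cinner v u := by
  simp only [cinner, map_sum, map_mul, RingHomCompTriple.comp_apply, RingHom.id_apply,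
    Complex.conj_conj]
  exact Finset.sum_congr rfl fun i _ => by ring

theorem cinner_sum_left {d : ℕ} (a : Fin d → ℂ) (w : Fin d → Fin d → ℂ) (u : Fin d → ℂ) :
    cinner (∑ k, a k • w k) u = ∑ k, conj (a k) * cinner (w k) u := by
  simp only [cinner, Finset.mul_sum, Finset.sum_apply, Pi.smul_apply, smul_eq_mul, map_sum,
    map_mul, Finset.sum_mul]
  rw [Finset.sum_comm]
  exact Finset.sum_congr rfl fun k _ => Finset.sum_congr rfl fun i _ => by ring

theorem cinner_sum_right {d : ℕ} (a : Fin d → ℂ) (w : Fin d → Fin d → ℂ) (u : Fin d → ℂ) :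
    cinner u (∑ k, a k • w k) = ∑ k, a k * cinner u (w k) := by
  simp only [cinner, Finset.mul_sum, Finset.sum_apply, Pi.smul_apply, smul_eq_mul]
  rw [Finset.sum_comm]
  exact Finset.sum_congr rfl fun k _ => Finset.sum_congr rfl fun i _ => by ring

theorem dot_ketbra {d : ℕ} (u v : Fin d → ℂ) :
    dotProduct (star v) ((ketbra u u).mulVec v) = cinner v u * cinner u v := by
  simp only [dotProduct, Matrix.mulVec, ketbra, cinner, Matrix.of_apply, Pi.star_apply,
    Finset.mul_sum, Finset.sum_mul, RCLike.star_def]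
  rw [Finset.sum_comm]
  exact Finset.sum_congr rfl fun i _ => Finset.sum_congr rfl fun j _ => by ring

theorem ketbra_sum {d : ℕ} (a b : Fin d → ℂ) (w : Fin d → Fin d → ℂ) :
    ketbra (∑ j, a j • w j) (∑ k, b k • w k)
      = ∑ j, ∑ k, (a j * conj (b k)) • ketbra (w j) (w k) := by
  ext i l
  simp only [ketbra, Matrix.of_apply, Finset.sum_apply, Pi.smul_apply, smul_eq_mul, map_sum,
    map_mul, Matrix.sum_apply, Matrix.smul_apply, Finset.sum_mul, Finset.mul_sum]
  rw [Finset.sum_comm]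
  exact Finset.sum_congr rfl fun j _ => Finset.sum_congr rfl fun k _ => by ring

theorem ketbra_conjTranspose {d : ℕ} (u : Fin d → ℂ) :
    (ketbra u u).conjTranspose = ketbra u u := by
  ext i j
  simp [ketbra, Matrix.conjTranspose_apply, mul_comm]

theorem real_smul_matrix {d : ℕ} (r : ℝ) (A : Matrix (Fin d) (Fin d) ℂ) :
    r • A = ((r : ℂ)) • A := by
  ext i j
  simp [Matrix.smul_apply, Complex.real_smul]

theorem real_smul_conjTranspose {d : ℕ} (r : ℝ) (A : Matrix (Fin d) (Fin d) ℂ) :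
    (r • A).conjTranspose = r • A.conjTranspose := by
  ext i j
  simp [Matrix.conjTranspose_apply]

/-- `A ↦ star v ⬝ᵥ A *ᵥ v` as a continuous linear map. -/
def evalCLM {d : ℕ} (v : Fin d → ℂ) : Matrix (Fin d) (Fin d) ℂ →L[ℂ] ℂ :=
  LinearMap.toContinuousLinearMap
    { toFun := fun A => dotProduct (star v) (A.mulVec v)
      map_add' := fun A B => by
        show dotProduct (star v) ((A + B).mulVec v) = _
        rw [Matrix.add_mulVec, dotProduct_add]
      map_smul' := fun c A => by
        show dotProduct (star v) ((c • A).mulVec v) = _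
        rw [Matrix.smul_mulVec, dotProduct_smul, RingHom.id_apply, smul_eq_mul] }

/-- conjugate-transpose as an `ℝ`-continuous linear map. -/
def ctCLM {d : ℕ} : Matrix (Fin d) (Fin d) ℂ →L[ℝ] Matrix (Fin d) (Fin d) ℂ :=
  LinearMap.toContinuousLinearMap
    { toFun := fun A => A.conjTranspose
      map_add' := fun A B => Matrix.conjTranspose_add A B
      map_smul' := fun c A => by
        show (c • A).conjTranspose = _
        ext i j
        simp [Matrix.conjTranspose_apply] }

theorem traceNorm_nonneg' {d : ℕ} (A : Matrix (Fin d) (Fin d) ℂ) : 0 ≤ traceNorm A := by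
  have key : ∀ (B : Matrix (Fin d) (Fin d) ℂ) (h : B.IsHermitian),
      0 ≤ ((h.eigenvectorUnitary.1 * Matrix.diagonal (((↑) : ℝ → ℂ) ∘ (√·) ∘ h.eigenvalues) *
        (star h.eigenvectorUnitary : Matrix (Fin d) (Fin d) ℂ)).trace).re := by
    intro B h
    rw [Matrix.trace_mul_cycle, Unitary.coe_star_mul_self, Matrix.one_mul, Matrix.trace_diagonal,
      Complex.re_sum]
    exact Finset.sum_nonneg fun i _ => by simp [Real.sqrt_nonneg]
  exact key _ _

theorem integral_complexOfReal {f : ℝ → ℝ} :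
    (∫ t : ℝ, ((f t : ℝ) : ℂ)) = ((∫ t : ℝ, f t : ℝ) : ℂ) :=
  integral_ofReal

open Matrix in
theorem trace_pow_ge {d : ℕ} (hd : 0 < d) (M : Matrix (Fin d) (Fin d) ℂ)
    (hM : M.PosSemidef) (v : Fin d → ℂ) (hv : dotProduct (star v) v = 1)
    (pq : ℝ) (hpq : 0 ≤ pq) (hval : dotProduct (star v) (M.mulVec v) = (pq : ℂ))
    (n : ℕ) (hn : 1 ≤ n) : pq ^ n ≤ ((M ^ n).trace).re := by
  have hH := hM.1
  set U : Matrix (Fin d) (Fin d) ℂ := (hH.eigenvectorUnitary : Matrix (Fin d) (Fin d) ℂ) with hU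
  set lam : Fin d → ℝ := hH.eigenvalues with hlam
  set D : Matrix (Fin d) (Fin d) ℂ := Matrix.diagonal (RCLike.ofReal ∘ lam) with hD
  have hUU : U * star U = 1 := (Matrix.mem_unitaryGroup_iff).mp hH.eigenvectorUnitary.2
  have hUU' : star U * U = 1 := (Matrix.mem_unitaryGroup_iff').mp hH.eigenvectorUnitary.2
  have hspec : M = U * D * star U := hH.spectral_theorem
  have hlnn : ∀ i, 0 ≤ lam i := fun i => hM.eigenvalues_nonneg i
  have hpow : ∀ m : ℕ, 1 ≤ m → M ^ m = U * D ^ m * star U := by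
    intro m hm
    induction m with
    | zero => omega
    | succ m ih =>
      rcases Nat.eq_or_lt_of_le hm with h1 | h1
      · rw [← h1, pow_one, pow_one]; exact hspec
      · have hm' : 1 ≤ m := by omega
        rw [pow_succ, ih hm', hspec, pow_succ]
        rw [Matrix.mul_assoc (U * D ^ m) (star U) (U * D * star U)]
        rw [show star U * (U * D * star U) = (star U * U) * D * star U by
          simp only [Matrix.mul_assoc]]
        rw [hUU', Matrix.one_mul]
        simp only [Matrix.mul_assoc]
  have htr : (M ^ n).trace = ∑ i, ((lam i : ℂ)) ^ n := by
    rw [hpow n hn, Matrix.trace_mul_cycle, hUU', Matrix.one_mul,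
      hD, Matrix.diagonal_pow, Matrix.trace_diagonal]
    simp [Function.comp]
  set w : Fin d → ℂ := (star U).mulVec v with hw
  have hsw : star v ᵥ* U = star w := by
    rw [hw, Matrix.star_mulVec, Matrix.star_eq_conjTranspose,
      Matrix.conjTranspose_conjTranspose]
  have hval2 : dotProduct (star w) (D.mulVec w) = (pq : ℂ) := by
    rw [← hval, hspec]
    rw [show (U * D * star U) *ᵥ v = U *ᵥ (D *ᵥ ((star U) *ᵥ v)) by
      simp only [← Matrix.mulVec_mulVec]]
    rw [Matrix.dotProduct_mulVec (star v) U, hsw, hw]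
  have hnorm2 : dotProduct (star w) w = 1 := by
    rw [← hv, hw, ← hsw, Matrix.dotProduct_mulVec, Matrix.vecMul_vecMul, hUU,
      Matrix.vecMul_one]
  set s : Fin d → ℝ := fun i => Complex.normSq (w i) with hs
  have hsnn : ∀ i, 0 ≤ s i := fun i => Complex.normSq_nonneg _
  have hDw : ∀ i, (D *ᵥ w) i = (lam i : ℂ) * w i := fun i => by
    rw [hD, Matrix.mulVec_diagonal]; rfl
  have hterm : ∀ i, ((lam i * s i : ℝ) : ℂ) = star w i * (D *ᵥ w) i := by
    intro i
    rw [hDw i, Pi.star_apply, Complex.ofReal_mul, hs, Complex.normSq_eq_conj_mul_self,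
      RCLike.star_def]
    ring
  have hval3 : (∑ i, lam i * s i : ℝ) = pq := by
    have h1 : ((∑ i, lam i * s i : ℝ) : ℂ) = (pq : ℂ) := by
      rw [Complex.ofReal_sum, ← hval2, dotProduct]
      exact Finset.sum_congr rfl fun i _ => hterm i
    exact_mod_cast h1
  have hnorm3 : (∑ i, s i : ℝ) = 1 := by
    have h1 : ((∑ i, s i : ℝ) : ℂ) = (1 : ℂ) := by
      rw [Complex.ofReal_sum, ← hnorm2, dotProduct]
      refine Finset.sum_congr rfl fun i _ => ?_
      rw [Pi.star_apply, hs, Complex.normSq_eq_conj_mul_self, RCLike.star_def]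
    exact_mod_cast h1
  obtain ⟨i0, -, hmax⟩ := Finset.exists_max_image Finset.univ lam
    ⟨⟨0, hd⟩, Finset.mem_univ _⟩
  have hple : pq ≤ lam i0 := by
    rw [← hval3]
    calc ∑ i, lam i * s i ≤ ∑ i, lam i0 * s i :=
          Finset.sum_le_sum fun i _ =>
            mul_le_mul_of_nonneg_right (hmax i (Finset.mem_univ i)) (hsnn i)
      _ = lam i0 * ∑ i, s i := by rw [Finset.mul_sum]
      _ = lam i0 := by rw [hnorm3, mul_one]
  have hretr : ((M ^ n).trace).re = ∑ i, lam i ^ n := by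
    rw [htr]
    rw [show (∑ i, ((lam i : ℂ)) ^ n) = ((∑ i, lam i ^ n : ℝ) : ℂ) by push_cast; rfl]
    rw [Complex.ofReal_re]
  rw [hretr]
  calc pq ^ n ≤ lam i0 ^ n := pow_le_pow_left₀ hpq hple n
    _ ≤ ∑ i, lam i ^ n :=
        Finset.single_le_sum (fun i _ => pow_nonneg (hlnn i) n) (Finset.mem_univ i0)

/-- sampling-overhead lower bound: with `ε = ‖ρ̄ − ρ‖₁` and
`(p_q + ε)ⁿ < 2 p_qⁿ`, one has `tr(ρ̄ⁿ) ≥ 2 p_qⁿ − (p_q + ε)ⁿ > 0`, hence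
`tr(ρ̄ⁿ)⁻² ≤ (2 p_qⁿ − (p_q + ε)ⁿ)⁻²`. -/
theorem sampling_overhead_bound
    {d : ℕ} (hd : 0 < d)
    (H : Matrix (Fin d) (Fin d) ℂ) (hH : H.IsHermitian)
    (ψ : Fin d → Fin d → ℂ) (E : Fin d → ℝ)
    (horth : ∀ j k, cinner (ψ j) (ψ k) = if j = k then 1 else 0)
    (heig : ∀ k, H.mulVec (ψ k) = (E k : ℂ) • ψ k)
    (c : Fin d → ℂ) (ψ0 : Fin d → ℂ) (hψ0 : ψ0 = ∑ k, c k • ψ k)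
    (hunit : cinner ψ0 ψ0 = 1)
    (p : Fin d → ℝ) (hp : ∀ k, p k = ‖c k‖ ^ 2)
    (ρ : Matrix (Fin d) (Fin d) ℂ) (hρ : ρ = ∑ k, (p k : ℂ) • ketbra (ψ k) (ψ k))
    (σ : ℝ) (hσ : 0 < σ)
    (q : Fin d) (hq : ∀ k, p k ≤ p q)
    (n : ℕ) (hn : 1 ≤ n)
    (ε : ℝ) (hε : ε = traceNorm (rhoBar H ψ0 σ - ρ))
    (hsmall : (p q + ε) ^ n < 2 * p q ^ n) :
    2 * p q ^ n - (p q + ε) ^ n ≤ ((rhoBar H ψ0 σ ^ n).trace).re ∧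
    0 < ((rhoBar H ψ0 σ ^ n).trace).re ∧
    (((rhoBar H ψ0 σ ^ n).trace).re)⁻¹ ^ 2 ≤ ((2 * p q ^ n - (p q + ε) ^ n)⁻¹) ^ 2 := by
  -- explicit form of the evolved state
  have hev : ∀ t : ℝ, evolve H ψ0 t
      = ∑ k, (c k * Complex.exp (-(Complex.I * (t : ℂ)) * (E k : ℂ))) • ψ k := by
    intro t
    rw [evolve, hψ0, ← Matrix.mulVecLin_apply, map_sum]
    refine Finset.sum_congr rfl fun k _ => ?_
    rw [_root_.map_smul, Matrix.mulVecLin_apply,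
      exp_mulVec_eigen ((-(Complex.I * (t : ℂ))) • H) (ψ k) ((-(Complex.I * (t : ℂ))) * E k)
        (by rw [Matrix.smul_mulVec, heig k, smul_smul]),
      smul_smul]
  -- decomposition of the integrand
  have hrep : (fun t : ℝ => gaussPDF σ t • rhoT H ψ0 t)
      = fun t => ∑ j, ∑ k, (((gaussPDF σ t : ℂ))
          * ((c j * Complex.exp (-(Complex.I * (t : ℂ)) * (E j : ℂ)))
            * conj (c k * Complex.exp (-(Complex.I * (t : ℂ)) * (E k : ℂ)))))
          • ketbra (ψ j) (ψ k) := by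
    funext t
    rw [rhoT, hev t, ketbra_sum, Finset.smul_sum]
    refine Finset.sum_congr rfl fun j _ => ?_
    rw [Finset.smul_sum]
    refine Finset.sum_congr rfl fun k _ => ?_
    rw [show ((gaussPDF σ t : ℂ))
        * ((c j * Complex.exp (-(Complex.I * (t : ℂ)) * (E j : ℂ)))
          * conj (c k * Complex.exp (-(Complex.I * (t : ℂ)) * (E k : ℂ))))
        = gaussPDF σ t • ((c j * Complex.exp (-(Complex.I * (t : ℂ)) * (E j : ℂ)))
          * conj (c k * Complex.exp (-(Complex.I * (t : ℂ)) * (E k : ℂ))))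
      from Complex.real_smul.symm]
    exact (smul_assoc _ _ _).symm
  -- integrability
  have hInt : Integrable (fun t : ℝ => gaussPDF σ t • rhoT H ψ0 t) := by
    rw [hrep]
    apply integrable_finset_sum
    intro j _
    apply integrable_finset_sum
    intro k _
    apply Integrable.smul_const
    have hc1 : Continuous fun t : ℝ
        => c j * Complex.exp (-(Complex.I * (t : ℂ)) * (E j : ℂ)) := by fun_prop
    have hc1' : Continuous fun t : ℝ
        => c k * Complex.exp (-(Complex.I * (t : ℂ)) * (E k : ℂ)) := by fun_prop
    have hc2 : Continuous fun t : ℝ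
        => conj (c k * Complex.exp (-(Complex.I * (t : ℂ)) * (E k : ℂ))) :=
      continuous_star.comp hc1'
    have hcont : Continuous fun t : ℝ => ((gaussPDF σ t : ℂ)
        * ((c j * Complex.exp (-(Complex.I * (t : ℂ)) * (E j : ℂ)))
          * conj (c k * Complex.exp (-(Complex.I * (t : ℂ)) * (E k : ℂ))))) :=
      (Complex.continuous_ofReal.comp (continuous_gaussPDF σ)).mul (hc1.mul hc2)
    apply Integrable.mono'
      (g := fun t => (‖c j‖ * ‖c k‖) * gaussPDF σ t)
    · exact (integrable_gaussPDF σ hσ).const_mul _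
    · exact hcont.aestronglyMeasurable
    · filter_upwards with t
      have h1 : ‖Complex.exp (-(Complex.I * (t : ℂ)) * (E j : ℂ))‖ = 1 := by
        rw [Complex.norm_exp]; simp [Complex.mul_re]
      have h2 : ‖Complex.exp (-(Complex.I * (t : ℂ)) * (E k : ℂ))‖ = 1 := by
        rw [Complex.norm_exp]; simp [Complex.mul_re]
      simp only [norm_mul, Complex.norm_conj, h1, h2, mul_one,
        Complex.norm_real, Real.norm_eq_abs, _root_.abs_of_nonneg (gaussPDF_nonneg σ hσ t)]
      exact le_of_eq (by ring)
  -- evaluation of quadratic forms of `ρ̄`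
  have heval : ∀ v : Fin d → ℂ, dotProduct (star v) ((rhoBar H ψ0 σ).mulVec v)
      = ∫ t : ℝ, (gaussPDF σ t : ℂ)
          * (cinner v (evolve H ψ0 t) * cinner (evolve H ψ0 t) v) := by
    intro v
    have h1 : dotProduct (star v) ((rhoBar H ψ0 σ).mulVec v)
        = evalCLM v (rhoBar H ψ0 σ) := rfl
    rw [h1, rhoBar, ← ContinuousLinearMap.integral_comp_comm (evalCLM v) hInt]
    refine integral_congr_ae (Filter.Eventually.of_forall fun t => ?_)
    show dotProduct (star v) ((gaussPDF σ t • rhoT H ψ0 t).mulVec v) = _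
    rw [real_smul_matrix, Matrix.smul_mulVec, dotProduct_smul, smul_eq_mul]
    rw [rhoT, dot_ketbra]
  -- Hermitian
  have hherm : (rhoBar H ψ0 σ).IsHermitian := by
    show (rhoBar H ψ0 σ).conjTranspose = _
    have h1 : (rhoBar H ψ0 σ).conjTranspose = ctCLM (rhoBar H ψ0 σ) := rfl
    rw [h1, rhoBar, ← ContinuousLinearMap.integral_comp_comm ctCLM hInt]
    refine integral_congr_ae (Filter.Eventually.of_forall fun t => ?_)
    show (gaussPDF σ t • rhoT H ψ0 t).conjTranspose = _
    rw [real_smul_conjTranspose, rhoT, ketbra_conjTranspose]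
    rfl
  -- positive semidefinite
  have hpsd : (rhoBar H ψ0 σ).PosSemidef := by
    refine Matrix.posSemidef_iff_dotProduct_mulVec.mpr ⟨hherm, fun x => ?_⟩
    rw [heval x]
    have hterm : ∀ t : ℝ, (gaussPDF σ t : ℂ)
        * (cinner x (evolve H ψ0 t) * cinner (evolve H ψ0 t) x)
        = ((gaussPDF σ t * Complex.normSq (cinner (evolve H ψ0 t) x) : ℝ) : ℂ) := by
      intro t
      rw [← cinner_conj (evolve H ψ0 t) x, ← Complex.normSq_eq_conj_mul_self]
      push_cast
      ring
    simp only [hterm]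
    rw [integral_complexOfReal]
    rw [Complex.zero_le_real]
    exact integral_nonneg fun t =>
      mul_nonneg (gaussPDF_nonneg σ hσ t) (Complex.normSq_nonneg _)
  -- the value at `ψ q`
  have hvq : dotProduct (star (ψ q)) ((rhoBar H ψ0 σ).mulVec (ψ q)) = ((p q : ℝ) : ℂ) := by
    rw [heval]
    have hterm : ∀ t : ℝ, (gaussPDF σ t : ℂ)
        * (cinner (ψ q) (evolve H ψ0 t) * cinner (evolve H ψ0 t) (ψ q))
        = ((gaussPDF σ t * p q : ℝ) : ℂ) := by
      intro t
      have e1 : cinner (ψ q) (evolve H ψ0 t)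
          = c q * Complex.exp (-(Complex.I * (t : ℂ)) * (E q : ℂ)) := by
        rw [hev t, cinner_sum_right]
        simp only [horth, mul_ite, mul_one, mul_zero]
        rw [Finset.sum_ite_eq Finset.univ q
          (fun k => c k * Complex.exp (-(Complex.I * (t : ℂ)) * (E k : ℂ)))]
        simp
      have e2 : cinner (evolve H ψ0 t) (ψ q)
          = conj (c q * Complex.exp (-(Complex.I * (t : ℂ)) * (E q : ℂ))) := by
        rw [← cinner_conj, e1]
      rw [e1, e2, Complex.mul_conj]
      have habs : Complex.normSq (c q * Complex.exp (-(Complex.I * (t : ℂ)) * (E q : ℂ)))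
          = p q := by
        rw [Complex.normSq_mul, hp q, Complex.normSq_eq_norm_sq, Complex.normSq_eq_norm_sq]
        rw [show ‖Complex.exp (-(Complex.I * (t : ℂ)) * (E q : ℂ))‖ = 1 by
          rw [Complex.norm_exp]; simp [Complex.mul_re]]
        ring
      rw [habs]
      push_cast
      ring
    simp only [hterm]
    rw [integral_complexOfReal, integral_mul_const, integral_gaussPDF σ hσ, one_mul]
  -- unit vector
  have hunitq : dotProduct (star (ψ q)) (ψ q) = 1 := by
    have h1 : dotProduct (star (ψ q)) (ψ q) = cinner (ψ q) (ψ q) := by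
      simp [dotProduct, cinner, Pi.star_apply, RCLike.star_def]
    rw [h1, horth q q, if_pos rfl]
  have hpq0 : 0 ≤ p q := by rw [hp q]; positivity
  have hεnn : 0 ≤ ε := hε ▸ traceNorm_nonneg' _
  have htr := trace_pow_ge hd _ hpsd (ψ q) hunitq (p q) hpq0 hvq n hn
  have hkey : 2 * p q ^ n - (p q + ε) ^ n ≤ p q ^ n := by
    have h1 : p q ^ n ≤ (p q + ε) ^ n :=
      pow_le_pow_left₀ hpq0 (le_add_of_nonneg_right hεnn) n
    linarith
  have h1 : 2 * p q ^ n - (p q + ε) ^ n ≤ ((rhoBar H ψ0 σ ^ n).trace).re :=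
    le_trans hkey htr
  have hpos0 : 0 < 2 * p q ^ n - (p q + ε) ^ n := by linarith
  have h2 : 0 < ((rhoBar H ψ0 σ ^ n).trace).re := lt_of_lt_of_le hpos0 h1
  refine ⟨h1, h2, ?_⟩
  have hinv : (((rhoBar H ψ0 σ ^ n).trace).re)⁻¹ ≤ (2 * p q ^ n - (p q + ε) ^ n)⁻¹ :=
    inv_anti₀ hpos0 h1
  exact pow_le_pow_left₀ (inv_nonneg.2 h2.le) hinv 2

end
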